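/- Let D and E be the ℕ×ℕ matrices with entries D(i,i) = y+i, D(i,i+1) = i+1, E(i,i) = x̄+i, E(i+1,i) = y+x̄+i, and all other entries zero (where x̄ and y are elements of a commutative ring). Then DE − ED = D + E, in the sense that for all indices i,j the corresponding entries agree (all sums involved are finite since the matrices are banded). -/

import Mathlib

/-- Entrywise product of ℕ×ℕ matrices; the (finite, for banded matrices) sums are
expressed with `finsum`. -/
noncomputable def matMul {R : Type*} [CommRing R] (M N : ℕ → ℕ → R) : ℕ → ℕ → R :=
  fun i j => ∑ᶠ k, M i k * N k j

/-- Powers of a ℕ×ℕ matrix, with `matPow M 0` the identity matrix. -/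
noncomputable def matPow {R : Type*} [CommRing R] (M : ℕ → ℕ → R) : ℕ → ℕ → ℕ → R
  | 0 => fun i j => if i = j then 1 else 0
  | n + 1 => matMul M (matPow M n)

/-- The matrix `D`: `D i i = y + i`, `D i (i+1) = i + 1`, other entries zero. -/
def matD {R : Type*} [CommRing R] (y : R) : ℕ → ℕ → R := fun i j =>
  if j = i then y + (i : R) else if j = i + 1 then (i : R) + 1 else 0

/-- The matrix `E`: `E i i = x̄ + i`, `E (i+1) i = y + x̄ + i`, other entries zero. -/
def matE {R : Type*} [CommRing R] (y xb : R) : ℕ → ℕ → R := fun i j =>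
  if j = i then xb + (i : R) else if i = j + 1 then y + xb + (j : R) else 0

lemma matMul_DE {R : Type*} [CommRing R] (y xb : R) (i j : ℕ) :
    matMul (matD y) (matE y xb) i j =
      matD y i i * matE y xb i j + matD y i (i + 1) * matE y xb (i + 1) j := by
  unfold matMul
  rw [finsum_eq_finset_sum_of_support_subset _
    (s := ({i, i + 1} : Finset ℕ))]
  · rw [Finset.sum_pair (by omega)]
  · intro k hk
    simp only [Function.mem_support] at hk
    simp only [Finset.coe_insert, Finset.coe_singleton, Set.mem_insert_iff,
      Set.mem_singleton_iff]
    by_contra h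
    push_neg at h
    apply hk
    simp [matD, h.1, h.2]

lemma matMul_ED {R : Type*} [CommRing R] (y xb : R) (i j : ℕ) :
    matMul (matE y xb) (matD y) (i + 1) j =
      matE y xb (i + 1) i * matD y i j + matE y xb (i + 1) (i + 1) * matD y (i + 1) j := by
  unfold matMul
  rw [finsum_eq_finset_sum_of_support_subset _
    (s := ({i, i + 1} : Finset ℕ))]
  · rw [Finset.sum_pair (by omega)]
  · intro k hk
    simp only [Function.mem_support] at hk
    simp only [Finset.coe_insert, Finset.coe_singleton, Set.mem_insert_iff,
      Set.mem_singleton_iff]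
    by_contra h
    push_neg at h
    apply hk
    have h1 : ¬ (k = i + 1) := h.2
    have h2 : ¬ (i + 1 = k + 1) := by omega
    simp [matE, h1, h2, show ¬ i = k by omega]

lemma matMul_ED0 {R : Type*} [CommRing R] (y xb : R) (j : ℕ) :
    matMul (matE y xb) (matD y) 0 j = matE y xb 0 0 * matD y 0 j := by
  unfold matMul
  rw [finsum_eq_finset_sum_of_support_subset _
    (s := ({0} : Finset ℕ))]
  · rw [Finset.sum_singleton]
  · intro k hk
    simp only [Function.mem_support] at hk
    simp only [Finset.coe_singleton, Set.mem_singleton_iff]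
    by_contra h
    apply hk
    have h2 : ¬ ((0:ℕ) = k + 1) := by omega
    simp [matE, h, h2]

theorem de_commutation {R : Type*} [CommRing R] (y xb : R) (i j : ℕ) :
    matMul (matD y) (matE y xb) i j - matMul (matE y xb) (matD y) i j =
      matD y i j + matE y xb i j := by
  rw [matMul_DE]
  rcases i with _ | i
  · rw [matMul_ED0]
    simp only [matD, matE]
    rcases j with _ | _ | j <;> simp <;> ring
  · rw [matMul_ED]
    simp only [matD, matE]
    split_ifs <;> subst_vars <;>
      first
        | omega
        | exact absurd trivial (by assumption)
        | (push_cast; ring1)
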